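/- Let a>0, b>0, N ≤ 3, and suppose (Cₙ) is a sequence of nonnegative reals with Cₙ → +∞. If tₙ > 0 satisfies a tₙ² + b Cₙ tₙ^{4-N} = 1, then tₙ → 0 and b Cₙ tₙ^{4-N} → 1 as n → +∞. -/
import Mathlib


theorem stmt_15 (a b : ℝ) (N : ℕ) (ha : 0 < a) (hb : 0 < b)
    (hN1 : 1 ≤ N) (hN3 : N ≤ 3) (C : ℕ → ℝ) (hCnn : ∀ n, 0 ≤ C n)
    (hCtop : Filter.Tendsto C Filter.atTop Filter.atTop)
    (t : ℕ → ℝ) (ht : ∀ n, 0 < t n ∧ a * (t n) ^ 2 + b * C n * (t n) ^ (4 - N) = 1) :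
    Filter.Tendsto t Filter.atTop (nhds 0) ∧
    Filter.Tendsto (fun n => b * C n * (t n) ^ (4 - N)) Filter.atTop (nhds 1) := by
  set k := 4 - N with hk
  have hk1 : 1 ≤ k := by omega
  have hkpos : (0:ℝ) < (k:ℝ) := by exact_mod_cast by omega
  -- b C t^k ≤ 1
  have hle : ∀ n, b * C n * t n ^ k ≤ 1 := by
    intro n
    have h := (ht n).2
    nlinarith [sq_nonneg (t n), (ht n).1]
  -- t^k → 0
  have htk : Filter.Tendsto (fun n => t n ^ k) Filter.atTop (nhds 0) := by
    have hbc : Filter.Tendsto (fun n => b * C n) Filter.atTop Filter.atTop :=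
      hCtop.const_mul_atTop hb
    have hinv : Filter.Tendsto (fun n => (b * C n)⁻¹) Filter.atTop (nhds 0) :=
      hbc.inv_tendsto_atTop
    have hev : ∀ᶠ n in Filter.atTop, t n ^ k ≤ (b * C n)⁻¹ := by
      filter_upwards [hbc.eventually_gt_atTop 0] with n hn
      rw [← one_div, le_div_iff₀ hn]
      nlinarith [hle n]
    exact squeeze_zero' (.of_forall fun n => (pow_pos (ht n).1 k).le) hev hinv
  -- t → 0
  have ht0 : Filter.Tendsto t Filter.atTop (nhds 0) := by
    have h := htk.rpow_const (p := (k:ℝ)⁻¹) (Or.inr (by positivity))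
    rw [Real.zero_rpow (by positivity)] at h
    convert h using 2 with n
    rw [← Real.rpow_natCast (t n) k, ← Real.rpow_mul (ht n).1.le,
      mul_inv_cancel₀ hkpos.ne', Real.rpow_one]
  refine ⟨ht0, ?_⟩
  have h2 : Filter.Tendsto (fun n => 1 - a * t n ^ 2) Filter.atTop (nhds 1) := by
    have := ((ht0.pow 2).const_mul a)
    simpa using (tendsto_const_nhds (x := (1:ℝ)) (f := Filter.atTop)).sub this
  refine h2.congr (fun n => ?_)
  have h := (ht n).2
  linarith
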